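/- Let s ∈ ℂ with 2s ∉ ℤ and 0 ≤ ℓ ≤ n. The map λ ↦ λ⁻ is a bijection from the set {λ ∈ Λ⁺_{s^ℓ}(n) : ♯λ = 1} onto itself. -/

import Mathlib

open Finset

noncomputable section

/-- The `i`-th standard basis vector of `ℂ^n`. -/
def eps (n : ℕ) (i : Fin n) : Fin n → ℂ := fun t => if t = i then 1 else 0

/-- Membership in `Λ_{s^ℓ}(n)` (indices written `0`-based: the first `ℓ` coordinates are
congruent to `s` mod `ℤ`, the remaining ones to `-s`). -/
def InLambda (n ℓ : ℕ) (s : ℂ) (lam : Fin n → ℂ) : Prop :=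
  ∀ i : Fin n, (i.val < ℓ → ∃ m : ℤ, lam i - s = (m : ℂ)) ∧
    (ℓ ≤ i.val → ∃ m : ℤ, lam i + s = (m : ℂ))

/-- Membership in `Λ⁺_{s^ℓ}(n)`: membership in `Λ_{s^ℓ}(n)` together with
`λ_i - λ_{i+1} ∈ ℤ_{>0}` for consecutive indices inside `{1,…,ℓ}` or inside `{ℓ+1,…,n}`. -/
def InLambdaPlus (n ℓ : ℕ) (s : ℂ) (lam : Fin n → ℂ) : Prop :=
  InLambda n ℓ s lam ∧
    ∀ i : Fin n, ∀ h : i.val + 1 < n,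
      (i.val + 1 < ℓ ∨ ℓ ≤ i.val) → ∃ m : ℤ, 0 < m ∧ lam i - lam ⟨i.val + 1, h⟩ = (m : ℂ)

open scoped Classical in
/-- The atypicality degree `♯λ`: the number of pairs `(i,j)` with `i ≤ ℓ < j`
(`1`-based) and `λ_i + λ_j = 0`. -/
def atyp (n ℓ : ℕ) (lam : Fin n → ℂ) : ℕ :=
  ((Finset.univ : Finset (Fin n × Fin n)).filter
    (fun pq => pq.1.val < ℓ ∧ ℓ ≤ pq.2.val ∧ lam pq.1 + lam pq.2 = 0)).card

/-- The relation `μ = λ⁻` for `λ ∈ Λ⁺_{s^ℓ}(n)` of atypicality one: for the (unique) pair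
`(p,q)` with `p ≤ ℓ < q` and `λ_p + λ_q = 0` and `α = ε_p - ε_q`, `μ = σ(λ - kα)` lies in
`Λ⁺_{s^ℓ}(n)`, where `k` is the smallest positive integer such that some permutation of
`λ - kα` lies in `Λ⁺_{s^ℓ}(n)`. -/
def MinusRel (n ℓ : ℕ) (s : ℂ) (lam mu : Fin n → ℂ) : Prop :=
  ∃ p q : Fin n, p.val < ℓ ∧ ℓ ≤ q.val ∧ lam p + lam q = 0 ∧
    ∃ k : ℕ, 0 < k ∧
      (∀ k' : ℕ, 0 < k' →
        (∃ σ : Equiv.Perm (Fin n),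
          InLambdaPlus n ℓ s ((lam - (k' : ℂ) • (eps n p - eps n q)) ∘ σ)) → k ≤ k') ∧
      (∃ σ : Equiv.Perm (Fin n), mu = (lam - (k : ℂ) • (eps n p - eps n q)) ∘ σ) ∧
      InLambdaPlus n ℓ s mu

namespace Stmt7
variable {n ℓ : ℕ} {s : ℂ}

lemma coset_ne (hs : ∀ m : ℤ, 2 * s ≠ (m : ℂ)) {a : ℂ}
    (h1 : ∃ m : ℤ, a - s = (m : ℂ)) (h2 : ∃ m : ℤ, a + s = (m : ℂ)) : False := by
  obtain ⟨m1, h1⟩ := h1; obtain ⟨m2, h2⟩ := h2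
  exact hs (m2 - m1) (by push_cast; linear_combination h2 - h1)

lemma eq_of_int_diff_re {a b : ℂ} (m : ℤ) (h : a - b = (m : ℂ)) (hre : a.re = b.re) : a = b := by
  have h0 : ((m : ℂ)).re = 0 := by rw [← h]; simp [Complex.sub_re, hre]
  have hm : m = 0 := by exact_mod_cast h0
  rw [hm] at h; push_cast at h; linear_combination h

lemma re_lt_of_pos_int {a b : ℂ} {m : ℤ} (hm : 0 < m) (h : a - b = (m : ℂ)) : b.re < a.re := by
  have h2 := congrArg Complex.re h
  simp only [Complex.sub_re, Complex.intCast_re] at h2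
  have hm' : (0 : ℝ) < m := by exact_mod_cast hm
  linarith

lemma upd_apply (f : Fin n → ℂ) (c : ℂ) (p q t : Fin n) :
    (f + c • (eps n p - eps n q)) t
      = f t + (if t = p then c else 0) - (if t = q then c else 0) := by
  simp only [Pi.add_apply, Pi.smul_apply, Pi.sub_apply, smul_eq_mul, eps]
  split_ifs <;> ring

lemma upd_apply' (f : Fin n → ℂ) (c : ℂ) (p q t : Fin n) :
    (f - c • (eps n p - eps n q)) t
      = f t - (if t = p then c else 0) + (if t = q then c else 0) := by
  simp only [Pi.sub_apply, Pi.smul_apply, smul_eq_mul, eps]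
  split_ifs <;> ring

lemma upd_inLambda {f : Fin n → ℂ} (hf : InLambda n ℓ s f) {p q : Fin n}
    (hp : p.val < ℓ) (hq : ℓ ≤ q.val) {c : ℂ} (hc : ∃ m : ℤ, c = (m : ℂ)) :
    InLambda n ℓ s (f + c • (eps n p - eps n q)) := by
  obtain ⟨m, rfl⟩ := hc
  intro t
  have hpq : p ≠ q := fun e => absurd hq (by rw [← e]; omega)
  refine ⟨fun ht => ?_, fun ht => ?_⟩
  · obtain ⟨m', hm'⟩ := (hf t).1 ht
    rw [upd_apply]
    by_cases h1 : t = p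
    · subst h1; rw [if_pos rfl, if_neg hpq]
      exact ⟨m' + m, by push_cast; linear_combination hm'⟩
    · rw [if_neg h1]
      by_cases h2 : t = q
      · subst h2; rw [if_pos rfl]; exact ⟨m' - m, by push_cast; linear_combination hm'⟩
      · rw [if_neg h2]; exact ⟨m', by linear_combination hm'⟩
  · obtain ⟨m', hm'⟩ := (hf t).2 ht
    rw [upd_apply]
    by_cases h1 : t = p
    · subst h1; rw [if_pos rfl, if_neg hpq]
      exact ⟨m' + m, by push_cast; linear_combination hm'⟩
    · rw [if_neg h1]
      by_cases h2 : t = q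
      · subst h2; rw [if_pos rfl]; exact ⟨m' - m, by push_cast; linear_combination hm'⟩
      · rw [if_neg h2]; exact ⟨m', by linear_combination hm'⟩

lemma neg_upd {f : Fin n → ℂ} (c : ℂ) (p q : Fin n) :
    f - c • (eps n p - eps n q) = f + (-c) • (eps n p - eps n q) := by
  rw [neg_smul, ← sub_eq_add_neg]

lemma upd_inLambda' {f : Fin n → ℂ} (hf : InLambda n ℓ s f) {p q : Fin n}
    (hp : p.val < ℓ) (hq : ℓ ≤ q.val) (k : ℕ) :
    InLambda n ℓ s (f - (k : ℂ) • (eps n p - eps n q)) := by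
  have : f - (k : ℂ) • (eps n p - eps n q) = f + (-(k : ℂ)) • (eps n p - eps n q) := by
    rw [neg_smul, ← sub_eq_add_neg]
  rw [this]
  exact upd_inLambda hf hp hq ⟨-(k : ℤ), by push_cast; ring⟩

lemma block_iff (hs : ∀ m : ℤ, 2 * s ≠ (m : ℂ)) {f : Fin n → ℂ} (σ : Equiv.Perm (Fin n))
    (hf : InLambda n ℓ s f) (hg : InLambda n ℓ s (f ∘ σ)) (i : Fin n) :
    i.val < ℓ ↔ (σ i).val < ℓ := by
  constructor
  · intro h
    by_contra hh
    push_neg at hh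
    exact coset_ne hs ((hg i).1 h) ((hf (σ i)).2 hh)
  · intro h
    by_contra hh
    push_neg at hh
    exact coset_ne hs ((hf (σ i)).1 h) ((hg i).2 hh)

lemma chain_aux {f : Fin n → ℂ} (hf : InLambdaPlus n ℓ s f) :
    ∀ d : ℕ, ∀ i j : Fin n, j.val = i.val + d + 1 → (j.val < ℓ ∨ ℓ ≤ i.val) →
      ∃ m : ℤ, 0 < m ∧ f i - f j = (m : ℂ) := by
  intro d
  induction d with
  | zero =>
    intro i j hj hb
    have h : i.val + 1 < n := by have := j.isLt; omega
    have hj' : j = ⟨i.val + 1, h⟩ := Fin.ext (by simpa using hj)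
    obtain ⟨m, hm, he⟩ := hf.2 i h (by omega)
    exact ⟨m, hm, by rw [hj']; exact he⟩
  | succ d ih =>
    intro i j hj hb
    have h : i.val + 1 < n := by have := j.isLt; omega
    set i' : Fin n := ⟨i.val + 1, h⟩ with hi'
    obtain ⟨m1, hm1, he1⟩ := hf.2 i h (by omega)
    obtain ⟨m2, hm2, he2⟩ := ih i' j (by simp [hi']; omega) (by simp [hi']; omega)
    exact ⟨m1 + m2, by omega, by push_cast; linear_combination he1 + he2⟩

lemma chain' {f : Fin n → ℂ} (hf : InLambdaPlus n ℓ s f) {i j : Fin n}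
    (hij : i.val < j.val) (hb : j.val < ℓ ∨ ℓ ≤ i.val) :
    ∃ m : ℤ, 0 < m ∧ f i - f j = (m : ℂ) :=
  chain_aux hf (j.val - i.val - 1) i j (by omega) hb

lemma ne_of_block {f : Fin n → ℂ} (hf : InLambdaPlus n ℓ s f) {i j : Fin n} (hij : i ≠ j)
    (hb : (i.val < ℓ ∧ j.val < ℓ) ∨ (ℓ ≤ i.val ∧ ℓ ≤ j.val)) : f i ≠ f j := by
  have hvij : i.val ≠ j.val := fun e => hij (Fin.ext e)
  rcases Nat.lt_or_ge i.val j.val with h | h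
  · obtain ⟨m, hm, he⟩ := chain' hf h (by omega)
    intro e
    rw [e, sub_self] at he
    exact absurd (by exact_mod_cast he.symm) (by omega)
  · have h' : j.val < i.val := by omega
    obtain ⟨m, hm, he⟩ := chain' hf h' (by omega)
    intro e
    rw [e, sub_self] at he
    exact absurd (by exact_mod_cast he.symm) (by omega)

lemma card_filter_lt {c : ℕ} (hc : c ≤ n) :
    ((Finset.univ : Finset (Fin n)).filter fun t => t.val < c).card = c := by
  classical
  have : ((Finset.univ : Finset (Fin n)).filter fun t => t.val < c)
      = (Finset.univ : Finset (Fin c)).map (Fin.castLEEmb hc) := by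
    ext t
    simp only [mem_filter, mem_univ, true_and, Finset.mem_map, Fin.castLEEmb_apply]
    constructor
    · intro ht
      exact ⟨⟨t.val, ht⟩, Fin.ext rfl⟩
    · rintro ⟨a, rfl⟩
      exact a.isLt
  rw [this, Finset.card_map, Finset.card_univ, Fintype.card_fin]

lemma exists_sorted (hl : ℓ ≤ n) (hs : ∀ m : ℤ, 2 * s ≠ (m : ℂ)) {f : Fin n → ℂ}
    (hf : InLambda n ℓ s f)
    (hd : ∀ t t' : Fin n, t ≠ t' →
      ((t.val < ℓ ∧ t'.val < ℓ) ∨ (ℓ ≤ t.val ∧ ℓ ≤ t'.val)) → f t ≠ f t') :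
    ∃ σ : Equiv.Perm (Fin n), InLambdaPlus n ℓ s (f ∘ σ) := by
  classical
  set g : Fin n → ℕ ×ₗ ℝ := fun t => toLex (if t.val < ℓ then 0 else 1, -(f t).re) with hg
  refine ⟨Tuple.sort g, ?_⟩
  have hmono := Tuple.monotone_sort g
  set σ := Tuple.sort g with hσ
  -- downward closedness
  have hdc : ∀ i j : Fin n, i ≤ j → (σ j).val < ℓ → (σ i).val < ℓ := by
    intro i j hij hj
    have hle : g (σ i) ≤ g (σ j) := hmono hij
    by_contra hi
    rcases Prod.Lex.le_iff.mp hle with h | ⟨h, _⟩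
    · simp only [hg, ofLex_toLex, hj, hi, if_pos, if_neg, if_true, if_false] at h
      omega
    · simp only [hg, ofLex_toLex, hj, hi, if_pos, if_neg, if_true, if_false] at h
      omega
  -- counting
  have hb : ∀ i : Fin n, i.val < ℓ ↔ (σ i).val < ℓ := by
    set S : Finset (Fin n) := Finset.univ.filter fun i => (σ i).val < ℓ with hS
    set Z : Finset (Fin n) := Finset.univ.filter fun t => t.val < ℓ with hZ
    have hScard : S.card = ℓ := by
      have : S = Z.image σ.symm := by
        ext i
        simp only [hS, hZ, mem_filter, mem_univ, true_and, Finset.mem_image]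
        constructor
        · intro h
          exact ⟨σ i, h, σ.symm_apply_apply i⟩
        · rintro ⟨t, ht, rfl⟩
          simpa using ht
      rw [this, Finset.card_image_of_injective _ σ.symm.injective, hZ, card_filter_lt hl]
    have hSZ : S ⊆ Z := by
      intro i hi
      simp only [hS, mem_filter, mem_univ, true_and] at hi
      simp only [hZ, mem_filter, mem_univ, true_and]
      by_contra hig
      push_neg at hig
      have hsub : (Finset.univ.filter fun t : Fin n => t.val < i.val + 1) ⊆ S := by
        intro j hj
        simp only [mem_filter, mem_univ, true_and] at hj
        simp only [hS, mem_filter, mem_univ, true_and]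
        exact hdc j i (by omega) hi
      have := Finset.card_le_card hsub
      rw [card_filter_lt (by have := i.isLt; omega)] at this
      omega
    have hSeq : S = Z := Finset.eq_of_subset_of_card_le hSZ
      (by rw [hScard, hZ, card_filter_lt hl])
    intro i
    constructor
    · intro h
      have : i ∈ Z := by simp [hZ, h]
      rw [← hSeq] at this
      simpa [hS] using this
    · intro h
      have : i ∈ S := by simp [hS, h]
      rw [hSeq] at this
      simpa [hZ] using this
  constructor
  · intro i
    constructor
    · intro h
      exact (hf (σ i)).1 ((hb i).mp h)
    · intro h
      exact (hf (σ i)).2 (Nat.le_of_not_lt (fun hh => absurd ((hb i).mpr hh) (by omega)))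
  · intro i h hcond
    set j : Fin n := ⟨i.val + 1, h⟩ with hj
    have hij : i < j := by simp [hj, Fin.lt_def]
    have hblocks : ((σ i).val < ℓ ∧ (σ j).val < ℓ) ∨ (ℓ ≤ (σ i).val ∧ ℓ ≤ (σ j).val) := by
      rcases hcond with hc | hc
      · exact Or.inl ⟨(hb i).mp (by omega), (hb j).mp (by simp [hj]; omega)⟩
      · refine Or.inr ⟨Nat.le_of_not_lt (fun hh => absurd ((hb i).mpr hh) (by omega)),
          Nat.le_of_not_lt (fun hh => absurd ((hb j).mpr hh) (by simp [hj]; omega))⟩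
    have hneidx : σ i ≠ σ j := fun e => absurd (σ.injective e) (by intro e'; rw [e'] at hij; exact lt_irrefl _ hij)
    have hne : f (σ i) ≠ f (σ j) := hd _ _ hneidx hblocks
    have hint : ∃ m : ℤ, f (σ i) - f (σ j) = (m : ℂ) := by
      rcases hblocks with ⟨h1, h2⟩ | ⟨h1, h2⟩
      · obtain ⟨m1, e1⟩ := (hf (σ i)).1 h1
        obtain ⟨m2, e2⟩ := (hf (σ j)).1 h2
        exact ⟨m1 - m2, by push_cast; linear_combination e1 - e2⟩
      · obtain ⟨m1, e1⟩ := (hf (σ i)).2 h1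
        obtain ⟨m2, e2⟩ := (hf (σ j)).2 h2
        exact ⟨m1 - m2, by push_cast; linear_combination e1 - e2⟩
    obtain ⟨m, hm⟩ := hint
    have hre : (f (σ j)).re ≤ (f (σ i)).re := by
      have hle : g (σ i) ≤ g (σ j) := hmono (le_of_lt hij)
      rcases Prod.Lex.le_iff.mp hle with hlt | ⟨-, hle2⟩
      · exfalso
        rcases hblocks with ⟨h1, h2⟩ | ⟨h1, h2⟩
        · simp only [hg, ofLex_toLex, h1, h2, if_pos, if_true] at hlt; omega
        · simp only [hg, ofLex_toLex, Nat.not_lt.mpr h1, Nat.not_lt.mpr h2, if_neg, if_false] at hlt; omega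
      · simp only [hg, ofLex_toLex] at hle2
        linarith [hle2]
    have hm0 : 0 ≤ m := by
      have := congrArg Complex.re hm
      simp only [Complex.sub_re, Complex.intCast_re] at this
      have : (0:ℝ) ≤ (m:ℝ) := by linarith
      exact_mod_cast this
    have hmne : m ≠ 0 := by
      intro e
      rw [e] at hm
      push_cast at hm
      exact hne (by linear_combination hm)
    exact ⟨m, by omega, hm⟩

lemma sorted_unique (hl : ℓ ≤ n) (hs : ∀ m : ℤ, 2 * s ≠ (m : ℂ)) {v w : Fin n → ℂ}
    (hv : InLambdaPlus n ℓ s v) (hw : InLambdaPlus n ℓ s w) (τ : Equiv.Perm (Fin n))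
    (hvw : v = w ∘ τ) : v = w := by
  have hbl : ∀ i : Fin n, i.val < ℓ ↔ (τ i).val < ℓ :=
    block_iff hs τ hw.1 (hvw ▸ hv.1)
  have h1 : ∀ i : Fin n, i.val < ℓ → v i = w i := by
    intro i hi
    have hℓn : ∀ j : Fin ℓ, (j : ℕ) < n := fun j => lt_of_lt_of_le j.isLt hl
    set Fv : Fin ℓ → ℝ := fun j => -(v ⟨j, hℓn j⟩).re with hFvdef
    set Fw : Fin ℓ → ℝ := fun j => -(w ⟨j, hℓn j⟩).re with hFwdef
    have hFv : StrictMono Fv := by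
      intro a b hab
      have hab' : (a : ℕ) < (b : ℕ) := hab
      obtain ⟨m, hm, he⟩ := chain' hv (i := ⟨a, hℓn a⟩) (j := ⟨b, hℓn b⟩) hab' (Or.inl b.isLt)
      have := re_lt_of_pos_int hm he
      simp only [hFvdef]
      linarith
    have hFw : StrictMono Fw := by
      intro a b hab
      have hab' : (a : ℕ) < (b : ℕ) := hab
      obtain ⟨m, hm, he⟩ := chain' hw (i := ⟨a, hℓn a⟩) (j := ⟨b, hℓn b⟩) hab' (Or.inl b.isLt)
      have := re_lt_of_pos_int hm he
      simp only [hFwdef]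
      linarith
    have hrange : Set.range Fv = Set.range Fw := by
      ext x
      simp only [Set.mem_range]
      constructor
      · rintro ⟨j, rfl⟩
        have hτj : (τ ⟨j, hℓn j⟩).val < ℓ := (hbl _).mp j.isLt
        refine ⟨⟨(τ ⟨j, hℓn j⟩).val, hτj⟩, ?_⟩
        have hvj : v ⟨j, hℓn j⟩ = w (τ ⟨j, hℓn j⟩) := congrFun hvw _
        have hfin : ((⟨(τ ⟨j, hℓn j⟩).val, hℓn ⟨(τ ⟨j, hℓn j⟩).val, hτj⟩⟩ : Fin n))
            = τ ⟨j, hℓn j⟩ := Fin.ext rfl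
        simp only [hFvdef, hFwdef, hfin, hvj]
      · rintro ⟨j, rfl⟩
        have hτt : τ (τ.symm ⟨j, hℓn j⟩) = ⟨j, hℓn j⟩ := τ.apply_symm_apply _
        have ht : (τ.symm ⟨j, hℓn j⟩).val < ℓ := (hbl _).mpr (by rw [hτt]; exact j.isLt)
        refine ⟨⟨(τ.symm ⟨j, hℓn j⟩).val, ht⟩, ?_⟩
        have hvt : v (τ.symm ⟨j, hℓn j⟩) = w (τ (τ.symm ⟨j, hℓn j⟩)) := congrFun hvw _
        have hfin : ((⟨(τ.symm ⟨j, hℓn j⟩).val, hℓn ⟨(τ.symm ⟨j, hℓn j⟩).val, ht⟩⟩ : Fin n))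
            = τ.symm ⟨j, hℓn j⟩ := Fin.ext rfl
        simp only [hFvdef, hFwdef, hfin, hvt, hτt]
    have hFeq : Fv = Fw := (hFv.range_inj hFw).mp hrange
    have hre : (v i).re = (w i).re := by
      have h3 := congrFun hFeq ⟨i.val, hi⟩
      have hfin : ((⟨i.val, hℓn ⟨i.val, hi⟩⟩ : Fin n)) = i := Fin.ext rfl
      simp only [hFvdef, hFwdef, hfin] at h3
      linarith
    obtain ⟨m1, e1⟩ := (hv.1 i).1 hi
    obtain ⟨m2, e2⟩ := (hw.1 i).1 hi
    exact eq_of_int_diff_re (m1 - m2) (by push_cast; linear_combination e1 - e2) hre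
  have h2 : ∀ i : Fin n, ℓ ≤ i.val → v i = w i := by
    intro i hi
    have hℓn : ∀ j : Fin (n - ℓ), ℓ + (j : ℕ) < n := fun j => by have := j.isLt; omega
    set Fv : Fin (n - ℓ) → ℝ := fun j => -(v ⟨ℓ + j, hℓn j⟩).re with hFvdef
    set Fw : Fin (n - ℓ) → ℝ := fun j => -(w ⟨ℓ + j, hℓn j⟩).re with hFwdef
    have hFv : StrictMono Fv := by
      intro a b hab
      have hab' : (a : ℕ) < (b : ℕ) := hab
      obtain ⟨m, hm, he⟩ := chain' hv (i := ⟨ℓ + a, hℓn a⟩) (j := ⟨ℓ + b, hℓn b⟩)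
        (by exact Nat.add_lt_add_left hab' ℓ) (Or.inr (by exact Nat.le_add_right ℓ a))
      have := re_lt_of_pos_int hm he
      simp only [hFvdef]
      linarith
    have hFw : StrictMono Fw := by
      intro a b hab
      have hab' : (a : ℕ) < (b : ℕ) := hab
      obtain ⟨m, hm, he⟩ := chain' hw (i := ⟨ℓ + a, hℓn a⟩) (j := ⟨ℓ + b, hℓn b⟩)
        (by exact Nat.add_lt_add_left hab' ℓ) (Or.inr (by exact Nat.le_add_right ℓ a))
      have := re_lt_of_pos_int hm he
      simp only [hFwdef]
      linarith
    have hrange : Set.range Fv = Set.range Fw := by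
      ext x
      simp only [Set.mem_range]
      constructor
      · rintro ⟨j, rfl⟩
        have hτj : ℓ ≤ (τ ⟨ℓ + j, hℓn j⟩).val := by
          refine Nat.le_of_not_lt fun hh => ?_
          have h4 : ((⟨ℓ + (j:ℕ), hℓn j⟩ : Fin n)).val < ℓ := (hbl _).mpr hh
          have h5 : ℓ + (j : ℕ) < ℓ := h4
          omega
        refine ⟨⟨(τ ⟨ℓ + j, hℓn j⟩).val - ℓ, by have := (τ ⟨ℓ + j, hℓn j⟩).isLt; omega⟩, ?_⟩
        have hvj : v ⟨ℓ + j, hℓn j⟩ = w (τ ⟨ℓ + j, hℓn j⟩) := congrFun hvw _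
        have hfin : ((⟨ℓ + ((τ ⟨ℓ + j, hℓn j⟩).val - ℓ),
            by have := (τ ⟨ℓ + j, hℓn j⟩).isLt; omega⟩ : Fin n)) = τ ⟨ℓ + j, hℓn j⟩ :=
          Fin.ext (by show ℓ + ((τ ⟨ℓ + j, hℓn j⟩).val - ℓ) = _; omega)
        simp only [hFvdef, hFwdef, hfin, hvj]
      · rintro ⟨j, rfl⟩
        have hτt : τ (τ.symm ⟨ℓ + j, hℓn j⟩) = ⟨ℓ + j, hℓn j⟩ := τ.apply_symm_apply _
        have ht : ℓ ≤ (τ.symm ⟨ℓ + j, hℓn j⟩).val := by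
          refine Nat.le_of_not_lt fun hh => ?_
          have h4 := (hbl _).mp hh
          rw [hτt] at h4
          have h5 : ℓ + (j : ℕ) < ℓ := h4
          omega
        refine ⟨⟨(τ.symm ⟨ℓ + j, hℓn j⟩).val - ℓ, by have := (τ.symm ⟨ℓ + j, hℓn j⟩).isLt; omega⟩, ?_⟩
        have hvt : v (τ.symm ⟨ℓ + j, hℓn j⟩) = w (τ (τ.symm ⟨ℓ + j, hℓn j⟩)) := congrFun hvw _
        have hfin : ((⟨ℓ + ((τ.symm ⟨ℓ + j, hℓn j⟩).val - ℓ),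
            by have := (τ.symm ⟨ℓ + j, hℓn j⟩).isLt; omega⟩ : Fin n))
            = τ.symm ⟨ℓ + j, hℓn j⟩ :=
          Fin.ext (by show ℓ + ((τ.symm ⟨ℓ + j, hℓn j⟩).val - ℓ) = _; omega)
        simp only [hFvdef, hFwdef, hfin, hvt, hτt]
    have hFeq : Fv = Fw := (hFv.range_inj hFw).mp hrange
    have hre : (v i).re = (w i).re := by
      have h3 := congrFun hFeq ⟨i.val - ℓ, by have := i.isLt; omega⟩
      have hfin : ((⟨ℓ + (i.val - ℓ), by have := i.isLt; omega⟩ : Fin n)) = i :=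
        Fin.ext (by show ℓ + (i.val - ℓ) = _; omega)
      simp only [hFvdef, hFwdef, hfin] at h3
      linarith
    obtain ⟨m1, e1⟩ := (hv.1 i).2 hi
    obtain ⟨m2, e2⟩ := (hw.1 i).2 hi
    exact eq_of_int_diff_re (m1 - m2) (by push_cast; linear_combination e1 - e2) hre
  funext i
  rcases Nat.lt_or_ge i.val ℓ with h | h
  · exact h1 i h
  · exact h2 i h

open scoped Classical in
lemma atyp_card {f : Fin n → ℂ} :
    atyp n ℓ f = ((Finset.univ : Finset (Fin n × Fin n)).filter
      (fun pq => pq.1.val < ℓ ∧ ℓ ≤ pq.2.val ∧ f pq.1 + f pq.2 = 0)).card := by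
  simp [atyp]

lemma pair_unique {f : Fin n → ℂ} (h1 : atyp n ℓ f = 1) {p q p' q' : Fin n}
    (hp : p.val < ℓ) (hq : ℓ ≤ q.val) (hpq : f p + f q = 0)
    (hp' : p'.val < ℓ) (hq' : ℓ ≤ q'.val) (hpq' : f p' + f q' = 0) : p = p' ∧ q = q' := by
  classical
  rw [atyp_card, Finset.card_eq_one] at h1
  obtain ⟨a, ha⟩ := h1
  have m1 : (p, q) ∈ (Finset.univ : Finset (Fin n × Fin n)).filter
      (fun pq => pq.1.val < ℓ ∧ ℓ ≤ pq.2.val ∧ f pq.1 + f pq.2 = 0) := by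
    simp only [mem_filter, mem_univ, true_and]
    exact ⟨hp, hq, hpq⟩
  have m2 : (p', q') ∈ (Finset.univ : Finset (Fin n × Fin n)).filter
      (fun pq => pq.1.val < ℓ ∧ ℓ ≤ pq.2.val ∧ f pq.1 + f pq.2 = 0) := by
    simp only [mem_filter, mem_univ, true_and]
    exact ⟨hp', hq', hpq'⟩
  rw [ha, Finset.mem_singleton] at m1 m2
  have h := m1.trans m2.symm
  exact ⟨congrArg Prod.fst h, congrArg Prod.snd h⟩

lemma atyp_pair {f : Fin n → ℂ} (h1 : atyp n ℓ f = 1) :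
    ∃ p q : Fin n, p.val < ℓ ∧ ℓ ≤ q.val ∧ f p + f q = 0 := by
  classical
  rw [atyp_card] at h1
  have : 0 < ((Finset.univ : Finset (Fin n × Fin n)).filter
      (fun pq => pq.1.val < ℓ ∧ ℓ ≤ pq.2.val ∧ f pq.1 + f pq.2 = 0)).card := by omega
  obtain ⟨⟨p, q⟩, hmem⟩ := Finset.card_pos.mp this
  simp only [mem_filter, mem_univ, true_and] at hmem
  exact ⟨p, q, hmem.1, hmem.2.1, hmem.2.2⟩

lemma atyp_comp {f : Fin n → ℂ} (σ : Equiv.Perm (Fin n))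
    (hb : ∀ i : Fin n, i.val < ℓ ↔ (σ i).val < ℓ) :
    atyp n ℓ (f ∘ σ) = atyp n ℓ f := by
  classical
  rw [atyp_card, atyp_card]
  apply Finset.card_bij (fun a _ => (σ a.1, σ a.2))
  · rintro ⟨i, j⟩ ha
    simp only [mem_filter, mem_univ, true_and] at ha ⊢
    exact ⟨(hb i).mp ha.1,
      Nat.le_of_not_lt (fun hh => absurd ((hb j).mpr hh) (by omega)), ha.2.2⟩
  · rintro ⟨i, j⟩ - ⟨i', j'⟩ - h
    simp only [Prod.mk.injEq] at h
    exact Prod.ext (σ.injective h.1) (σ.injective h.2)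
  · rintro ⟨i, j⟩ hmem
    simp only [mem_filter, mem_univ, true_and] at hmem
    refine ⟨(σ.symm i, σ.symm j), ?_, by simp⟩
    simp only [mem_filter, mem_univ, true_and, Function.comp_apply,
      σ.apply_symm_apply]
    refine ⟨?_, ?_, hmem.2.2⟩
    · have := hb (σ.symm i)
      rw [σ.apply_symm_apply] at this
      exact this.mpr hmem.1
    · refine Nat.le_of_not_lt fun hh => ?_
      have := hb (σ.symm j)
      rw [σ.apply_symm_apply] at this
      exact absurd (this.mp hh) (by omega)

lemma atyp_update {f g : Fin n → ℂ} (h1 : atyp n ℓ f = 1) {p q : Fin n}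
    (hp : p.val < ℓ) (hq : ℓ ≤ q.val) (hpq : f p + f q = 0)
    (hgpq : g p + g q = 0) (hg : ∀ t, t ≠ p → t ≠ q → g t = f t)
    (hA : ∀ i : Fin n, i.val < ℓ → i ≠ p → f i + g q ≠ 0)
    (hB : ∀ j : Fin n, ℓ ≤ j.val → j ≠ q → g p + f j ≠ 0) : atyp n ℓ g = 1 := by
  classical
  rw [atyp_card, Finset.card_eq_one]
  refine ⟨(p, q), ?_⟩
  ext ⟨i, j⟩
  simp only [mem_filter, mem_univ, true_and, Finset.mem_singleton, Prod.mk.injEq]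
  constructor
  · rintro ⟨hi, hj, hij⟩
    have hjnep : j ≠ p := fun e => by rw [e] at hj; omega
    have hineq : i ≠ q := fun e => by rw [e] at hi; omega
    by_cases hip : i = p
    · by_cases hjq : j = q
      · exact ⟨hip, hjq⟩
      · exfalso
        rw [hip, hg j hjnep hjq] at hij
        exact hB j hj hjq hij
    · by_cases hjq : j = q
      · exfalso
        rw [hjq, hg i hip hineq] at hij
        exact hA i hi hip hij
      · exfalso
        rw [hg i hip hineq, hg j hjnep hjq] at hij
        exact hip (pair_unique h1 hi hj hij hp hq hpq).1
  · rintro ⟨rfl, rfl⟩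
    exact ⟨hp, hq, hgpq⟩

lemma sortable_iff (hl : ℓ ≤ n) (hs : ∀ m : ℤ, 2 * s ≠ (m : ℂ)) {f : Fin n → ℂ}
    (hf : InLambdaPlus n ℓ s f) {p q : Fin n} (hp : p.val < ℓ) (hq : ℓ ≤ q.val) (k : ℕ) :
    (∃ σ : Equiv.Perm (Fin n), InLambdaPlus n ℓ s ((f - (k : ℂ) • (eps n p - eps n q)) ∘ σ)) ↔
    ((∀ i : Fin n, i.val < ℓ → i ≠ p → f i ≠ f p - k) ∧
     (∀ j : Fin n, ℓ ≤ j.val → j ≠ q → f j ≠ f q + k)) := by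
  have hpq : p ≠ q := fun e => absurd hq (by rw [← e]; omega)
  set g := f - (k : ℂ) • (eps n p - eps n q) with hgdef
  have hgp : g p = f p - k := by
    rw [hgdef, upd_apply', if_pos rfl, if_neg hpq]; ring
  have hgq : g q = f q + k := by
    rw [hgdef, upd_apply', if_neg (Ne.symm hpq), if_pos rfl]; ring
  have hgt : ∀ t, t ≠ p → t ≠ q → g t = f t := by
    intro t h1 h2
    rw [hgdef, upd_apply', if_neg h1, if_neg h2]; ring
  have hgL : InLambda n ℓ s g := upd_inLambda' hf.1 hp hq k
  constructor
  · rintro ⟨σ, hσ⟩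
    have hb := block_iff hs σ hgL hσ.1
    have hgd : ∀ t t' : Fin n, t ≠ t' →
        ((t.val < ℓ ∧ t'.val < ℓ) ∨ (ℓ ≤ t.val ∧ ℓ ≤ t'.val)) → g t ≠ g t' := by
      intro t t' htt hbl
      have e1 : g t = (g ∘ σ) (σ.symm t) := by simp
      have e2 : g t' = (g ∘ σ) (σ.symm t') := by simp
      rw [e1, e2]
      have hbt : ∀ u : Fin n, u.val < ℓ ↔ (σ.symm u).val < ℓ := by
        intro u
        have := hb (σ.symm u)
        rw [σ.apply_symm_apply] at this
        exact this.symm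
      apply ne_of_block hσ
      · intro e
        exact htt (by simpa using congrArg σ e)
      · rcases hbl with ⟨ht, ht'⟩ | ⟨ht, ht'⟩
        · exact Or.inl ⟨(hbt t).mp ht, (hbt t').mp ht'⟩
        · refine Or.inr ⟨Nat.le_of_not_lt fun hh => absurd ((hbt t).mpr hh) (by omega),
            Nat.le_of_not_lt fun hh => absurd ((hbt t').mpr hh) (by omega)⟩
    refine ⟨fun i hi hip h => ?_, fun j hj hjq h => ?_⟩
    · refine hgd i p hip (Or.inl ⟨hi, hp⟩) ?_
      rw [hgt i hip (fun e => by rw [e] at hi; omega), hgp, h]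
    · refine hgd j q hjq (Or.inr ⟨hj, hq⟩) ?_
      rw [hgt j (fun e => by rw [e] at hj; omega) hjq, hgq, h]
  · rintro ⟨hA, hB⟩
    apply exists_sorted hl hs hgL
    intro t t' htt hbl
    rcases hbl with ⟨ht, ht'⟩ | ⟨ht, ht'⟩
    · have htq : t ≠ q := fun e => by rw [e] at ht; omega
      have ht'q : t' ≠ q := fun e => by rw [e] at ht'; omega
      by_cases h1 : t = p
      · rw [h1, hgp, hgt t' (h1 ▸ htt.symm) ht'q]
        exact fun e => hA t' ht' (h1 ▸ htt.symm) e.symm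
      · by_cases h2 : t' = p
        · rw [h2, hgp, hgt t h1 htq]
          exact hA t ht h1
        · rw [hgt t h1 htq, hgt t' h2 ht'q]
          exact ne_of_block hf htt (Or.inl ⟨ht, ht'⟩)
    · have htp : t ≠ p := fun e => by rw [e] at ht; omega
      have ht'p : t' ≠ p := fun e => by rw [e] at ht'; omega
      by_cases h1 : t = q
      · rw [h1, hgq, hgt t' ht'p (h1 ▸ htt.symm)]
        exact fun e => hB t' ht' (h1 ▸ htt.symm) e.symm
      · by_cases h2 : t' = q
        · rw [h2, hgq, hgt t htp h1]
          exact hB t ht h1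
        · rw [hgt t htp h1, hgt t' ht'p h2]
          exact ne_of_block hf htt (Or.inr ⟨ht, ht'⟩)

lemma exists_big (f : Fin n → ℂ) (a b : ℂ) :
    ∃ k : ℕ, 0 < k ∧ ∀ i : Fin n, f i ≠ a - (k : ℂ) ∧ f i ≠ b + (k : ℂ) := by
  classical
  set M : ℝ := ∑ i : Fin n, (|a.re - (f i).re| + |(f i).re - b.re|) with hM
  have hM0 : (0:ℝ) ≤ M := Finset.sum_nonneg fun i _ => by positivity
  have hMi : ∀ i : Fin n, |a.re - (f i).re| + |(f i).re - b.re| ≤ M :=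
    fun i => Finset.single_le_sum (f := fun i => |a.re - (f i).re| + |(f i).re - b.re|)
      (fun j _ => by positivity) (Finset.mem_univ i)
  obtain ⟨k, hk⟩ := exists_nat_gt M
  refine ⟨k, by exact_mod_cast hM0.trans_lt hk, fun i => ⟨?_, ?_⟩⟩
  · intro e
    have h := congrArg Complex.re e
    simp only [Complex.sub_re, Complex.natCast_re] at h
    have h2 : |a.re - (f i).re| = (k : ℝ) := by
      rw [h, show a.re - (a.re - (k:ℝ)) = (k:ℝ) by ring]
      exact abs_of_nonneg (by positivity)
    have := hMi i
    have := abs_nonneg ((f i).re - b.re)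
    linarith
  · intro e
    have h := congrArg Complex.re e
    simp only [Complex.add_re, Complex.natCast_re] at h
    have h2 : |(f i).re - b.re| = (k : ℝ) := by
      rw [h, show b.re + (k:ℝ) - b.re = (k:ℝ) by ring]
      exact abs_of_nonneg (by positivity)
    have := hMi i
    have := abs_nonneg (a.re - (f i).re)
    linarith

end Stmt7

open Stmt7

/-- For `2s ∉ ℤ`, the map `λ ↦ λ⁻` is a bijection from
`{λ ∈ Λ⁺_{s^ℓ}(n) : ♯λ = 1}` onto itself: every `λ` in this set has a unique image `λ⁻` in
the set, and every `μ` in the set is `λ⁻` for a unique `λ` in the set. -/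
theorem stmt7 {n ℓ : ℕ} (hl : ℓ ≤ n) (s : ℂ) (hs : ∀ m : ℤ, 2 * s ≠ (m : ℂ)) :
    (∀ lam : Fin n → ℂ, InLambdaPlus n ℓ s lam → atyp n ℓ lam = 1 →
      ∃! mu : Fin n → ℂ,
        (InLambdaPlus n ℓ s mu ∧ atyp n ℓ mu = 1) ∧ MinusRel n ℓ s lam mu) ∧
    (∀ mu : Fin n → ℂ, InLambdaPlus n ℓ s mu → atyp n ℓ mu = 1 →
      ∃! lam : Fin n → ℂ,
        (InLambdaPlus n ℓ s lam ∧ atyp n ℓ lam = 1) ∧ MinusRel n ℓ s lam mu) := by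
  constructor
  · intro lam hlam hat
    obtain ⟨p, q, hp, hq, hpq⟩ := atyp_pair hat
    have hP : ∃ k : ℕ, 0 < k ∧ ∃ σ : Equiv.Perm (Fin n),
        InLambdaPlus n ℓ s ((lam - (k : ℂ) • (eps n p - eps n q)) ∘ σ) := by
      obtain ⟨k, hk0, hk⟩ := exists_big lam (lam p) (lam q)
      exact ⟨k, hk0, (sortable_iff hl hs hlam hp hq k).mpr
        ⟨fun i _ _ => (hk i).1, fun j _ _ => (hk j).2⟩⟩
    classical
    set k := Nat.find hP with hkdef
    obtain ⟨hk0, σ₀, hσ₀⟩ := Nat.find_spec hP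
    set g := lam - (k : ℂ) • (eps n p - eps n q) with hgdef
    have hpqne : p ≠ q := fun e => absurd hq (by rw [← e]; omega)
    have hgL : InLambda n ℓ s g := upd_inLambda' hlam.1 hp hq k
    have hb := block_iff hs σ₀ hgL hσ₀.1
    have hAB := (sortable_iff hl hs hlam hp hq k).mp ⟨σ₀, hσ₀⟩
    have hgp : g p = lam p - k := by rw [hgdef, upd_apply', if_pos rfl, if_neg hpqne]; ring
    have hgq : g q = lam q + k := by
      rw [hgdef, upd_apply', if_neg (Ne.symm hpqne), if_pos rfl]; ring
    have hgt : ∀ t, t ≠ p → t ≠ q → g t = lam t := fun t h1 h2 => by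
      rw [hgdef, upd_apply', if_neg h1, if_neg h2]; ring
    have hatg : atyp n ℓ g = 1 := by
      refine atyp_update hat hp hq hpq ?_ hgt ?_ ?_
      · rw [hgp, hgq]; linear_combination hpq
      · intro i hi hip h
        refine hAB.1 i hi hip ?_
        rw [hgq] at h
        linear_combination h - hpq
      · intro j hj hjq h
        refine hAB.2 j hj hjq ?_
        rw [hgp] at h
        linear_combination h - hpq
    have hatmu : atyp n ℓ (g ∘ σ₀) = 1 := (atyp_comp σ₀ hb).trans hatg
    refine ⟨g ∘ σ₀, ⟨⟨hσ₀, hatmu⟩, p, q, hp, hq, hpq, k, hk0,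
      fun k' hk' hsort => Nat.find_min' hP ⟨hk', hsort⟩, ⟨σ₀, rfl⟩, hσ₀⟩, ?_⟩
    rintro mu' ⟨⟨hmu'Λ, hmu'at⟩, p', q', hp', hq', hpq', k', hk'0, hmin', ⟨σ', hσ'eq⟩, -⟩
    obtain ⟨hpe, hqe⟩ := pair_unique hat hp' hq' hpq' hp hq hpq
    subst hpe
    subst hqe
    have hkk1 : k ≤ k' := Nat.find_min' hP ⟨hk'0, σ', hσ'eq ▸ hmu'Λ⟩
    have hkk2 : k' ≤ k := hmin' k hk0 ⟨σ₀, hσ₀⟩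
    have hkk : k' = k := le_antisymm hkk2 hkk1
    subst hkk
    refine sorted_unique hl hs hmu'Λ hσ₀ (σ'.trans σ₀.symm) ?_
    funext x
    have h1 : mu' x = g (σ' x) := by rw [hσ'eq]; rfl
    rw [h1]
    simp [Function.comp]
  · intro mu hmu hatmu
    obtain ⟨p', q', hp', hq', hpq'⟩ := atyp_pair hatmu
    classical
    have hQ : ∃ t : ℕ, 0 < t ∧
        (∀ i : Fin n, i.val < ℓ → i ≠ p' → mu i ≠ mu p' + (t : ℂ)) ∧
        (∀ j : Fin n, ℓ ≤ j.val → j ≠ q' → mu j ≠ mu q' - (t : ℂ)) := by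
      obtain ⟨t, ht0, ht⟩ := exists_big mu (mu q') (mu p')
      exact ⟨t, ht0, fun i _ _ => (ht i).2, fun j _ _ => (ht j).1⟩
    set t₀ := Nat.find hQ with ht₀def
    obtain ⟨ht₀, hQ1, hQ2⟩ := Nat.find_spec hQ
    have hpq'ne : p' ≠ q' := fun e => absurd hq' (by rw [← e]; omega)
    set hv : Fin n → ℂ := mu + (t₀ : ℂ) • (eps n p' - eps n q') with hvdef
    have hvp : hv p' = mu p' + t₀ := by
      rw [hvdef, upd_apply, if_pos rfl, if_neg hpq'ne]; ring
    have hvq : hv q' = mu q' - t₀ := by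
      rw [hvdef, upd_apply, if_neg (Ne.symm hpq'ne), if_pos rfl]; ring
    have hvt : ∀ u, u ≠ p' → u ≠ q' → hv u = mu u := fun u h1 h2 => by
      rw [hvdef, upd_apply, if_neg h1, if_neg h2]; ring
    have hvL : InLambda n ℓ s hv := upd_inLambda hmu.1 hp' hq' ⟨(t₀ : ℤ), by push_cast; ring⟩
    have hvd : ∀ u u' : Fin n, u ≠ u' →
        ((u.val < ℓ ∧ u'.val < ℓ) ∨ (ℓ ≤ u.val ∧ ℓ ≤ u'.val)) → hv u ≠ hv u' := by
      intro u u' huu hbl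
      rcases hbl with ⟨hu, hu'⟩ | ⟨hu, hu'⟩
      · have huq : u ≠ q' := fun e => by rw [e] at hu; omega
        have hu'q : u' ≠ q' := fun e => by rw [e] at hu'; omega
        by_cases h1 : u = p'
        · rw [h1, hvp, hvt u' (h1 ▸ huu.symm) hu'q]
          exact fun e => hQ1 u' hu' (h1 ▸ huu.symm) e.symm
        · by_cases h2 : u' = p'
          · rw [h2, hvp, hvt u h1 huq]
            exact hQ1 u hu h1
          · rw [hvt u h1 huq, hvt u' h2 hu'q]
            exact ne_of_block hmu huu (Or.inl ⟨hu, hu'⟩)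
      · have hup : u ≠ p' := fun e => by rw [e] at hu; omega
        have hu'p : u' ≠ p' := fun e => by rw [e] at hu'; omega
        by_cases h1 : u = q'
        · rw [h1, hvq, hvt u' hu'p (h1 ▸ huu.symm)]
          exact fun e => hQ2 u' hu' (h1 ▸ huu.symm) e.symm
        · by_cases h2 : u' = q'
          · rw [h2, hvq, hvt u hup h1]
            exact hQ2 u hu h1
          · rw [hvt u hup h1, hvt u' hu'p h2]
            exact ne_of_block hmu huu (Or.inr ⟨hu, hu'⟩)
    obtain ⟨σ, hσ⟩ := exists_sorted hl hs hvL hvd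
    set lam := hv ∘ σ with hlamdef
    have hbσ := block_iff hs σ hvL hσ.1
    set p := σ.symm p' with hpdef
    set q := σ.symm q' with hqdef
    have hσp : σ p = p' := σ.apply_symm_apply p'
    have hσq : σ q = q' := σ.apply_symm_apply q'
    have hp : p.val < ℓ := (hbσ p).mpr (by rw [hσp]; exact hp')
    have hq : ℓ ≤ q.val := Nat.le_of_not_lt fun hh => by
      have := (hbσ q).mp hh
      rw [hσq] at this
      omega
    have hpqne : p ≠ q := fun e => absurd hq (by rw [← e]; omega)
    have hlp : lam p = mu p' + t₀ := by
      rw [hlamdef]; show hv (σ p) = _; rw [hσp, hvp]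
    have hlq : lam q = mu q' - t₀ := by
      rw [hlamdef]; show hv (σ q) = _; rw [hσq, hvq]
    have hlt : ∀ i : Fin n, i ≠ p → i ≠ q → lam i = mu (σ i) := by
      intro i h1 h2
      have e1 : σ i ≠ p' := fun e => h1 (by rw [hpdef, ← e, σ.symm_apply_apply])
      have e2 : σ i ≠ q' := fun e => h2 (by rw [hqdef, ← e, σ.symm_apply_apply])
      show hv (σ i) = mu (σ i)
      exact hvt _ e1 e2
    have hpqsum : lam p + lam q = 0 := by rw [hlp, hlq]; linear_combination hpq'
    have hatv : atyp n ℓ hv = 1 := by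
      refine atyp_update hatmu hp' hq' hpq' ?_ hvt ?_ ?_
      · rw [hvp, hvq]; linear_combination hpq'
      · intro i hi hip h
        refine hQ1 i hi hip ?_
        rw [hvq] at h
        linear_combination h - hpq'
      · intro j hj hjq h
        refine hQ2 j hj hjq ?_
        rw [hvp] at h
        linear_combination h - hpq'
    have hatlam : atyp n ℓ lam = 1 := (atyp_comp σ hbσ).trans hatv
    have hmin : ∀ k' : ℕ, 0 < k' →
        (∃ σ' : Equiv.Perm (Fin n),
          InLambdaPlus n ℓ s ((lam - (k' : ℂ) • (eps n p - eps n q)) ∘ σ')) → t₀ ≤ k' := by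
      intro k' hk' hsort
      by_contra hlt'
      push_neg at hlt'
      obtain ⟨hA, hB⟩ := (sortable_iff hl hs hσ hp hq k').mp hsort
      have hnQ := Nat.find_min hQ (show t₀ - k' < t₀ by omega)
      have hcast : ((t₀ - k' : ℕ) : ℂ) = (t₀ : ℂ) - (k' : ℂ) := by
        rw [Nat.cast_sub (le_of_lt hlt')]
      have hcases : (∃ i : Fin n, i.val < ℓ ∧ i ≠ p' ∧ mu i = mu p' + ((t₀ - k' : ℕ) : ℂ)) ∨
          (∃ j : Fin n, ℓ ≤ j.val ∧ j ≠ q' ∧ mu j = mu q' - ((t₀ - k' : ℕ) : ℂ)) := by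
        by_contra hcon
        push_neg at hcon
        exact hnQ ⟨by omega, fun i hi hip => hcon.1 i hi hip, fun j hj hjq => hcon.2 j hj hjq⟩
      rcases hcases with ⟨i, hi, hip, hie⟩ | ⟨j, hj, hjq, hje⟩
      · have hσi : σ (σ.symm i) = i := σ.apply_symm_apply i
        have hi₀ : (σ.symm i).val < ℓ := (hbσ (σ.symm i)).mpr (by rw [hσi]; exact hi)
        have hi₀p : σ.symm i ≠ p := fun e => hip (by rw [← hσi, e, hσp])
        have hi₀q : σ.symm i ≠ q := fun e => absurd hq (by rw [← e]; omega)
        refine hA (σ.symm i) hi₀ hi₀p ?_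
        rw [hlt (σ.symm i) hi₀p hi₀q, hσi, hie, hcast, hlp]
        ring
      · have hσj : σ (σ.symm j) = j := σ.apply_symm_apply j
        have hj₀ : ℓ ≤ (σ.symm j).val := Nat.le_of_not_lt fun hh => by
          have := (hbσ (σ.symm j)).mp hh
          rw [hσj] at this
          omega
        have hj₀q : σ.symm j ≠ q := fun e => hjq (by rw [← hσj, e, hσq])
        have hj₀p : σ.symm j ≠ p := fun e => absurd hp (by rw [← e]; omega)
        refine hB (σ.symm j) hj₀ hj₀q ?_
        rw [hlt (σ.symm j) hj₀p hj₀q, hσj, hje, hcast, hlq]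
        ring
    have hμeq : mu = (lam - (t₀ : ℂ) • (eps n p - eps n q)) ∘ ⇑σ.symm := by
      funext x
      show mu x = (lam - (t₀ : ℂ) • (eps n p - eps n q)) (σ.symm x)
      rw [upd_apply']
      have hlam2 : lam (σ.symm x) = hv x := by
        rw [hlamdef]; show hv (σ (σ.symm x)) = hv x; rw [σ.apply_symm_apply]
      rw [hlam2, hvdef, upd_apply]
      have e1 : σ.symm x = p ↔ x = p' := by
        constructor
        · intro h
          have := congrArg σ h
          rwa [σ.apply_symm_apply, hσp] at this
        · intro h
          rw [h]
      have e2 : σ.symm x = q ↔ x = q' := by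
        constructor
        · intro h
          have := congrArg σ h
          rwa [σ.apply_symm_apply, hσq] at this
        · intro h
          rw [h]
      by_cases h1 : x = p' <;> by_cases h2 : x = q'
      · exact absurd (h1.symm.trans h2) hpq'ne
      · rw [if_pos h1, if_neg h2, if_pos (e1.mpr h1), if_neg (fun hh => h2 (e2.mp hh))]; ring
      · rw [if_neg h1, if_pos h2, if_neg (fun hh => h1 (e1.mp hh)), if_pos (e2.mpr h2)]; ring
      · rw [if_neg h1, if_neg h2, if_neg (fun hh => h1 (e1.mp hh)),
          if_neg (fun hh => h2 (e2.mp hh))]; ring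
    refine ⟨lam, ⟨⟨hσ, hatlam⟩, p, q, hp, hq, hpqsum, t₀, ht₀, hmin, ⟨σ.symm, hμeq⟩, hmu⟩, ?_⟩
    rintro lam' ⟨⟨hlam', hatlam'⟩, p₁, q₁, hp₁, hq₁, hpq₁, k₁, hk₁, hmin₁, ⟨σ₁, hμ₁⟩, -⟩
    set g₁ := lam' - (k₁ : ℂ) • (eps n p₁ - eps n q₁) with hg₁def
    have hpq₁ne : p₁ ≠ q₁ := fun e => absurd hq₁ (by rw [← e]; omega)
    have hg₁p : g₁ p₁ = lam' p₁ - k₁ := by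
      rw [hg₁def, upd_apply', if_pos rfl, if_neg hpq₁ne]; ring
    have hg₁q : g₁ q₁ = lam' q₁ + k₁ := by
      rw [hg₁def, upd_apply', if_neg (Ne.symm hpq₁ne), if_pos rfl]; ring
    have hg₁t : ∀ u, u ≠ p₁ → u ≠ q₁ → g₁ u = lam' u := fun u h1 h2 => by
      rw [hg₁def, upd_apply', if_neg h1, if_neg h2]; ring
    have hg₁L : InLambda n ℓ s g₁ := upd_inLambda' hlam'.1 hp₁ hq₁ k₁
    have hb₁ := block_iff hs σ₁ hg₁L (hμ₁ ▸ hmu.1)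
    have hmux : ∀ x, mu x = g₁ (σ₁ x) := fun x => by rw [hμ₁]; rfl
    have hp₁' : (σ₁.symm p₁).val < ℓ := by
      have h := hb₁ (σ₁.symm p₁)
      rw [σ₁.apply_symm_apply] at h
      exact h.mpr hp₁
    have hq₁' : ℓ ≤ (σ₁.symm q₁).val := Nat.le_of_not_lt fun hh => by
      have h := (hb₁ (σ₁.symm q₁)).mp hh
      rw [σ₁.apply_symm_apply] at h
      omega
    have hsum' : mu (σ₁.symm p₁) + mu (σ₁.symm q₁) = 0 := by
      rw [hmux, hmux, σ₁.apply_symm_apply, σ₁.apply_symm_apply, hg₁p, hg₁q]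
      linear_combination hpq₁
    obtain ⟨hpe, hqe⟩ := pair_unique hatmu hp₁' hq₁' hsum' hp' hq' hpq'
    have hmup : mu p' = lam' p₁ - k₁ := by
      have h := hmux (σ₁.symm p₁)
      rw [σ₁.apply_symm_apply, hg₁p, hpe] at h
      exact h
    have hmuq : mu q' = lam' q₁ + k₁ := by
      have h := hmux (σ₁.symm q₁)
      rw [σ₁.apply_symm_apply, hg₁q, hqe] at h
      exact h
    have hQk₁ : 0 < k₁ ∧ (∀ i : Fin n, i.val < ℓ → i ≠ p' → mu i ≠ mu p' + (k₁ : ℂ)) ∧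
        (∀ j : Fin n, ℓ ≤ j.val → j ≠ q' → mu j ≠ mu q' - (k₁ : ℂ)) := by
      refine ⟨hk₁, ?_, ?_⟩
      · intro i hi hip he
        have hiq : σ₁ i ≠ q₁ := fun e => by
          have h := (hb₁ i).mp hi
          rw [e] at h; omega
        by_cases hipp : σ₁ i = p₁
        · exact hip (by rw [← σ₁.symm_apply_apply i, hipp]; exact hpe)
        · have hmi : mu i = lam' (σ₁ i) := by rw [hmux i, hg₁t (σ₁ i) hipp hiq]
          rw [hmi, hmup] at he
          have he' : lam' (σ₁ i) = lam' p₁ := by linear_combination he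
          exact ne_of_block hlam' hipp (Or.inl ⟨(hb₁ i).mp hi, hp₁⟩) he'
      · intro j hj hjq he
        have hjℓ : ℓ ≤ (σ₁ j).val := Nat.le_of_not_lt fun hh => by
          have h := (hb₁ j).mpr hh; omega
        have hjp : σ₁ j ≠ p₁ := fun e => by rw [e] at hjℓ; omega
        by_cases hjqq : σ₁ j = q₁
        · exact hjq (by rw [← σ₁.symm_apply_apply j, hjqq]; exact hqe)
        · have hmj : mu j = lam' (σ₁ j) := by rw [hmux j, hg₁t (σ₁ j) hjp hjqq]
          rw [hmj, hmuq] at he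
          have he' : lam' (σ₁ j) = lam' q₁ := by linear_combination he
          exact ne_of_block hlam' hjqq (Or.inr ⟨hjℓ, hq₁⟩) he'
    have ht₀k₁ : t₀ ≤ k₁ := Nat.find_min' hQ hQk₁
    have hk₁t₀ : k₁ ≤ t₀ := by
      by_contra hgt'
      push_neg at hgt'
      have hd : 0 < k₁ - t₀ := by omega
      have hcast : ((k₁ - t₀ : ℕ) : ℂ) = (k₁ : ℂ) - (t₀ : ℂ) := by
        rw [Nat.cast_sub (le_of_lt hgt')]
      have hsort : ∃ σ' : Equiv.Perm (Fin n),
          InLambdaPlus n ℓ s ((lam' - ((k₁ - t₀ : ℕ) : ℂ) • (eps n p₁ - eps n q₁)) ∘ σ') := by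
        refine (sortable_iff hl hs hlam' hp₁ hq₁ (k₁ - t₀)).mpr ⟨?_, ?_⟩
        · intro i hi hip he
          have hiq : i ≠ q₁ := fun e => by rw [e] at hi; omega
          have hbi : (σ₁.symm i).val < ℓ := by
            have h := hb₁ (σ₁.symm i)
            rw [σ₁.apply_symm_apply] at h
            exact h.mpr hi
          have hbip : σ₁.symm i ≠ p' := fun e => hip (σ₁.symm.injective (e.trans hpe.symm))
          refine hQ1 (σ₁.symm i) hbi hbip ?_
          have hcor : mu (σ₁.symm i) = lam' i := by
            rw [hmux (σ₁.symm i), σ₁.apply_symm_apply, hg₁t i hip hiq]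
          rw [hcor, he]
          linear_combination -hmup - hcast
        · intro j hj hjq he
          have hjp : j ≠ p₁ := fun e => by rw [e] at hj; omega
          have hbj : ℓ ≤ (σ₁.symm j).val := Nat.le_of_not_lt fun hh => by
            have h := (hb₁ (σ₁.symm j)).mp hh
            rw [σ₁.apply_symm_apply] at h
            omega
          have hbjq : σ₁.symm j ≠ q' := fun e => hjq (σ₁.symm.injective (e.trans hqe.symm))
          refine hQ2 (σ₁.symm j) hbj hbjq ?_
          have hcor : mu (σ₁.symm j) = lam' j := by
            rw [hmux (σ₁.symm j), σ₁.apply_symm_apply, hg₁t j hjp hjq]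
          rw [hcor, he]
          linear_combination -hmuq + hcast
      have := hmin₁ (k₁ - t₀) hd hsort
      omega
    have hk₁eq : k₁ = t₀ := le_antisymm hk₁t₀ ht₀k₁
    subst hk₁eq
    have hlam'eq : lam' = hv ∘ ⇑σ₁.symm := by
      funext x
      show lam' x = hv (σ₁.symm x)
      rw [hvdef, upd_apply]
      have hmu' : mu (σ₁.symm x) = g₁ x := by rw [hmux (σ₁.symm x), σ₁.apply_symm_apply]
      rw [hmu', hg₁def, upd_apply']
      have e1 : σ₁.symm x = p' ↔ x = p₁ := by
        constructor
        · intro h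
          exact σ₁.symm.injective (h.trans hpe.symm)
        · intro h
          rw [h]; exact hpe
      have e2 : σ₁.symm x = q' ↔ x = q₁ := by
        constructor
        · intro h
          exact σ₁.symm.injective (h.trans hqe.symm)
        · intro h
          rw [h]; exact hqe
      by_cases h1 : x = p₁ <;> by_cases h2 : x = q₁
      · exact absurd (h1.symm.trans h2) hpq₁ne
      · rw [if_pos h1, if_neg h2, if_pos (e1.mpr h1), if_neg (fun hh => h2 (e2.mp hh))]; ring
      · rw [if_neg h1, if_pos h2, if_neg (fun hh => h1 (e1.mp hh)), if_pos (e2.mpr h2)]; ring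
      · rw [if_neg h1, if_neg h2, if_neg (fun hh => h1 (e1.mp hh)),
          if_neg (fun hh => h2 (e2.mp hh))]; ring
    refine sorted_unique hl hs hlam' hσ (σ₁.symm.trans σ.symm) ?_
    funext x
    have hx1 : lam' x = hv (σ₁.symm x) := congrFun hlam'eq x
    have hx2 : hv (σ (σ.symm (σ₁.symm x))) = hv (σ₁.symm x) := by rw [σ.apply_symm_apply]
    exact hx1.trans hx2.symm


end
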